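/- Let σ = τ₁τ₂⋯τ_k ∈ S_n be a product of k pairwise disjoint cycles of odd length d with Fix(σ) = ∅, and let π, π' ∈ S_n satisfy π² = (π')² = 1, πσπ⁻¹ = σ⁻¹ and π'σ(π')⁻¹ = σ⁻¹. If π and π' are conjugate in S_n, then there exists ρ ∈ Cent₀(σ) such that ρπρ⁻¹ = π'. -/

import Mathlib

open Equiv Equiv.Perm Finset

/-- The "non-trivial centralizer" `Cent₀(σ)`: permutations commuting with `σ`
whose support is contained in the support of `σ`. -/
def Cent0 {n : ℕ} (σ : Equiv.Perm (Fin n)) : Subgroup (Equiv.Perm (Fin n)) where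
  carrier := {π | Commute π σ ∧ π.support ⊆ σ.support}
  one_mem' := ⟨Commute.one_left σ, by simp⟩
  mul_mem' := by
    intro a b ha hb
    exact ⟨ha.1.mul_left hb.1, (Equiv.Perm.support_mul_le a b).trans (sup_le ha.2 hb.2)⟩
  inv_mem' := by
    intro a ha
    exact ⟨ha.1.inv_left, by rw [Equiv.Perm.support_inv]; exact ha.2⟩

/-- The product `∏_{i ∈ s} τᵢ^{zᵢ}` of powers of pairwise disjoint permutations. -/
def Kprod {n k : ℕ} (τ : Fin k → Equiv.Perm (Fin n))
    (hdisj : ∀ i j, i ≠ j → Equiv.Perm.Disjoint (τ i) (τ j))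
    (s : Finset (Fin k)) (z : Fin k → ℤ) : Equiv.Perm (Fin n) :=
  s.noncommProd (fun i => τ i ^ z i)
    (fun a _ b _ hab => Commute.zpow_zpow ((hdisj a b hab).commute) _ _)

/-- The subgroup `H_σ = { x ∈ S_{X_σ} : xσx⁻¹ = σ^z for some integer z }`, as a set. -/
def Hgrp {n : ℕ} (σ : Equiv.Perm (Fin n)) : Set (Equiv.Perm (Fin n)) :=
  {x | x.support ⊆ σ.support ∧ ∃ z : ℤ, x * σ * x⁻¹ = σ ^ z}

namespace Stmt11

variable {n d : ℕ}

lemma zadd (σ : Equiv.Perm (Fin n)) (a b : ℤ) (x : Fin n) :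
    (σ ^ a) ((σ ^ b) x) = (σ ^ (a + b)) x := by
  rw [← Equiv.Perm.mul_apply, ← zpow_add]

lemma list_prod_fix (l : List (Equiv.Perm (Fin n))) (x : Fin n)
    (h : ∀ e ∈ l, e x = x) : l.prod x = x := by
  induction l with
  | nil => rfl
  | cons a t ih =>
      rw [List.prod_cons, Equiv.Perm.mul_apply,
        ih (fun e he => h e (List.mem_cons_of_mem a he))]
      exact h a (List.mem_cons_self)

lemma list_prod_apply (l : List (Equiv.Perm (Fin n))) (hl : l.Pairwise Equiv.Perm.Disjoint)
    (x : Fin n) : (∀ e ∈ l, e x = x) ∨ ∃ e ∈ l, e x ≠ x ∧ l.prod x = e x := by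
  induction l with
  | nil => exact Or.inl (by simp)
  | cons a t ih =>
      have hat : ∀ e ∈ t, a.Disjoint e := fun e he => (List.pairwise_cons.1 hl).1 e he
      rcases ih (List.pairwise_cons.1 hl).2 with h | ⟨e, he, hex, hpe⟩
      · by_cases ha : a x = x
        · refine Or.inl ?_
          intro e he
          rcases List.mem_cons.1 he with rfl | he'
          · exact ha
          · exact h e he'
        · refine Or.inr ⟨a, List.mem_cons_self, ha, ?_⟩
          rw [List.prod_cons, Equiv.Perm.mul_apply, list_prod_fix t x h]
      · have hax : a (e x) = e x := by
          rcases (hat e he) (e x) with h1 | h1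
          · exact h1
          · exact absurd (e.injective h1) hex
        refine Or.inr ⟨e, List.mem_cons_of_mem a he, hex, ?_⟩
        rw [List.prod_cons, Equiv.Perm.mul_apply, hpe, hax]

lemma zpow_congr {σ : Equiv.Perm (Fin n)} (hσd : σ ^ (d : ℤ) = 1) {a b : ℤ}
    (h : (d : ℤ) ∣ a - b) : σ ^ a = σ ^ b := by
  obtain ⟨t, ht⟩ := h
  have hab : a = b + (d : ℤ) * t := by linarith
  rw [hab, zpow_add, zpow_mul, hσd, one_zpow, mul_one]

lemma zpow_cancel {σ : Equiv.Perm (Fin n)}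
    (hkey : ∀ (x : Fin n) (m : ℤ), (σ ^ m) x = x ↔ (d : ℤ) ∣ m)
    {a b : ℤ} {u : Fin n} (h : (σ ^ a) u = (σ ^ b) u) : (d : ℤ) ∣ a - b := by
  refine (hkey u _).1 ?_
  have h1 : (σ ^ (a - b)) u = (σ ^ (-b)) ((σ ^ a) u) := by
    rw [zadd, show -b + a = a - b by ring]
  rw [h1, h, zadd, show -b + b = (0 : ℤ) by ring]
  simp

lemma fin_eq_of_dvd (j j' : Fin d) (h : (d : ℤ) ∣ (j : ℤ) - (j' : ℤ)) : j = j' := by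
  have h1 : ((j : ℤ) - j') = 0 := by
    refine Int.eq_zero_of_dvd_of_natAbs_lt_natAbs h ?_
    have hj := j.isLt; have hj' := j'.isLt
    omega
  have h2 : (j : ℤ) = j' := by linarith
  exact Fin.ext (by exact_mod_cast h2)

lemma reduce_exp {σ : Equiv.Perm (Fin n)} (hσd : σ ^ (d : ℤ) = 1) (hd0 : 0 < d) (m : ℤ) :
    ∃ j : Fin d, σ ^ ((j : ℕ) : ℤ) = σ ^ m := by
  have h0 : (0 : ℤ) < d := by exact_mod_cast hd0
  have hnn : 0 ≤ m % d := Int.emod_nonneg m (by omega)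
  have hlt : m % d < d := Int.emod_lt_of_pos m h0
  refine ⟨⟨(m % d).toNat, by omega⟩, ?_⟩
  refine zpow_congr hσd ?_
  have ht : (((m % (d : ℤ)).toNat : ℕ) : ℤ) = m % d := Int.toNat_of_nonneg hnn
  rw [ht]
  exact ⟨-(m / d), by have := Int.mul_ediv_add_emod m d; linarith⟩

variable {σ p : Equiv.Perm (Fin n)}

lemma fix_unique (hkey : ∀ (x : Fin n) (m : ℤ), (σ ^ m) x = x ↔ (d : ℤ) ∣ m) (hodd : Odd d)
    (hps : ∀ (m : ℤ) (x : Fin n), p ((σ ^ m) x) = (σ ^ (-m)) (p x))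
    {x y : Fin n} (hx : p x = x) (hy : p y = y) (h : σ.SameCycle x y) : x = y := by
  obtain ⟨m, hm⟩ := h
  have h1 : (σ ^ (-m)) x = y := by
    have h2 := hps m x
    rw [hm, hy, hx] at h2
    exact h2.symm
  have h2 : (d : ℤ) ∣ m - (-m) := zpow_cancel hkey (by rw [hm, h1])
  have h3 : (d : ℤ) ∣ 2 * m := by rw [show (2 : ℤ) * m = m - (-m) by ring]; exact h2
  have hc : IsCoprime (d : ℤ) (2 : ℤ) := by
    have := Nat.isCoprime_iff_coprime.2 (hodd.coprime_two_right)
    exact_mod_cast this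
  have hdm : (d : ℤ) ∣ m := hc.dvd_of_dvd_mul_left h3
  have h4 := (hkey x m).2 hdm
  rw [h4] at hm
  exact hm

lemma exists_fix (hkey : ∀ (x : Fin n) (m : ℤ), (σ ^ m) x = x ↔ (d : ℤ) ∣ m)
    (hσd : σ ^ (d : ℤ) = 1) (hodd : Odd d)
    (hps : ∀ (m : ℤ) (x : Fin n), p ((σ ^ m) x) = (σ ^ (-m)) (p x))
    {z : Fin n} (hz : σ.SameCycle z (p z)) : ∃ x, p x = x ∧ σ.SameCycle x z := by
  obtain ⟨m, hm⟩ := hz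
  obtain ⟨e, he⟩ := hodd
  set j : ℤ := ((e : ℤ) + 1) * m with hj
  refine ⟨(σ ^ j) z, ?_, ⟨-j, by rw [zadd, show -j + j = (0 : ℤ) by ring]; simp⟩⟩
  have h1 : p ((σ ^ j) z) = (σ ^ (-j + m)) z := by
    rw [hps j z, ← hm, zadd]
  rw [h1]
  have hd : (d : ℤ) ∣ (-j + m) - j := by
    refine ⟨-m, ?_⟩
    rw [hj, he]; push_cast; ring
  rw [zpow_congr hσd hd]

def pb (p : Equiv.Perm (Fin n)) : Bool → Equiv.Perm (Fin n) := fun b => if b then p else 1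

lemma p_invol (hp2 : p ^ 2 = 1) (x : Fin n) : p (p x) = x := by
  rw [← Equiv.Perm.mul_apply, ← sq, hp2, Equiv.Perm.one_apply]

lemma p_pb (hp2 : p ^ 2 = 1) (b : Bool) (x : Fin n) : p ((pb p b) x) = (pb p (!b)) x := by
  cases b
  · simp [pb]
  · simp only [pb, if_true, Bool.not_true, if_false]
    rw [p_invol hp2]
    rfl

lemma rigid (hkey : ∀ (x : Fin n) (m : ℤ), (σ ^ m) x = x ↔ (d : ℤ) ∣ m)
    {w : Fin n} (hw : ¬ σ.SameCycle w (p w)) {a a' : ℤ} {b b' : Bool}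
    (h : (σ ^ a) ((pb p b) w) = (σ ^ a') ((pb p b') w)) : b = b' ∧ (d : ℤ) ∣ a - a' := by
  cases b <;> cases b' <;>
    simp only [pb, Bool.false_eq_true, if_true, if_false, Equiv.Perm.one_apply, Equiv.Perm.coe_one, id_eq] at h
  · exact ⟨rfl, zpow_cancel hkey h⟩
  · exfalso
    refine hw ⟨-a' + a, ?_⟩
    rw [← zadd σ (-a') a w, h, zadd, show -a' + a' = (0 : ℤ) by ring]
    simp
  · exfalso
    refine hw ⟨-a + a', ?_⟩
    have h2 := congrArg (fun y => (σ ^ (-a)) y) h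
    rw [zadd, show -a + a = (0 : ℤ) by ring] at h2
    simp only [zpow_zero, Equiv.Perm.coe_one, id_eq] at h2
    rw [h2, zadd]
  · exact ⟨rfl, zpow_cancel hkey h⟩

lemma S_zpow (hps : ∀ (m : ℤ) (x : Fin n), p ((σ ^ m) x) = (σ ^ (-m)) (p x))
    (i : ℤ) (z : Fin n) :
    σ.SameCycle ((σ ^ i) z) (p ((σ ^ i) z)) ↔ σ.SameCycle z (p z) := by
  rw [hps i z, Equiv.Perm.sameCycle_zpow_left, Equiv.Perm.sameCycle_zpow_right]

lemma S_p (hp2 : p ^ 2 = 1) (z : Fin n) :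
    σ.SameCycle (p z) (p (p z)) ↔ σ.SameCycle z (p z) := by
  rw [p_invol hp2]
  exact Equiv.Perm.sameCycle_comm

lemma S_pb (hp2 : p ^ 2 = 1) (b : Bool) (z : Fin n) :
    σ.SameCycle ((pb p b) z) (p ((pb p b) z)) ↔ σ.SameCycle z (p z) := by
  cases b
  · simp [pb]
  · simp only [pb, if_true]
    exact S_p hp2 z

def pSetoid (σ p : Equiv.Perm (Fin n)) (hp2 : p ^ 2 = 1)
    (hps : ∀ (m : ℤ) (x : Fin n), p ((σ ^ m) x) = (σ ^ (-m)) (p x)) :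
    Setoid {z : Fin n // ¬ σ.SameCycle z (p z)} where
  r a b := σ.SameCycle a.1 b.1 ∨ σ.SameCycle a.1 (p b.1)
  iseqv := by
    have hpmap : ∀ x y : Fin n, σ.SameCycle x y → σ.SameCycle (p x) (p y) := by
      rintro x y ⟨i, hi⟩
      exact ⟨-i, by rw [← hps i x, hi]⟩
    constructor
    · exact fun a => Or.inl (Equiv.Perm.SameCycle.refl σ a.1)
    · rintro a b (h | h)
      · exact Or.inl h.symm
      · have h2 := hpmap _ _ h
        rw [p_invol hp2] at h2
        exact Or.inr h2.symm
    · rintro a b c (h1 | h1) (h2 | h2)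
      · exact Or.inl (h1.trans h2)
      · exact Or.inr (h1.trans h2)
      · exact Or.inr (h1.trans (hpmap _ _ h2))
      · have h3 := hpmap _ _ h2
        rw [p_invol hp2] at h3
        exact Or.inl (h1.trans h3)

lemma rel_of_eq (hp2 : p ^ 2 = 1)
    (hps : ∀ (m : ℤ) (x : Fin n), p ((σ ^ m) x) = (σ ^ (-m)) (p x))
    {w w' : Fin n} {a a' : ℤ} {b b' : Bool}
    (h : (σ ^ a) ((pb p b) w) = (σ ^ a') ((pb p b') w')) :
    σ.SameCycle w w' ∨ σ.SameCycle w (p w') := by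
  have h2 : (pb p b) w = (σ ^ (-a + a')) ((pb p b') w') := by
    rw [← zadd, ← h, zadd, show -a + a = (0:ℤ) by ring]; simp
  cases b <;> cases b' <;>
    simp only [pb, Bool.false_eq_true, if_true, if_false, Equiv.Perm.one_apply,
      Equiv.Perm.coe_one, id_eq] at h2
  · exact Or.inl ⟨-(-a + a'), by
      rw [h2, zadd, show -(-a+a') + (-a+a') = (0:ℤ) by ring]; simp⟩
  · exact Or.inr ⟨-(-a + a'), by
      rw [h2, zadd, show -(-a+a') + (-a+a') = (0:ℤ) by ring]; simp⟩
  · have h3 : w = (σ ^ (-(-a + a'))) (p w') := by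
      have h4 := congrArg p h2
      rw [p_invol hp2, hps] at h4
      exact h4
    exact Or.inr ⟨-a + a', by
      rw [h3, zadd, show (-a+a') + (-(-a+a')) = (0:ℤ) by ring]; simp⟩
  · have h3 : w = (σ ^ (-(-a + a'))) (p (p w')) := by
      have h4 := congrArg p h2
      rw [p_invol hp2, hps] at h4
      exact h4
    rw [p_invol hp2] at h3
    exact Or.inl ⟨-a + a', by
      rw [h3, zadd, show (-a+a') + (-(-a+a')) = (0:ℤ) by ring]; simp⟩

open scoped Classical in
lemma S_card (σ p : Equiv.Perm (Fin n))
    (hkey : ∀ (x : Fin n) (m : ℤ), (σ ^ m) x = x ↔ (d : ℤ) ∣ m)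
    (hσd : σ ^ (d : ℤ) = 1) (hd0 : 0 < d) (hodd : Odd d)
    (hps : ∀ (m : ℤ) (x : Fin n), p ((σ ^ m) x) = (σ ^ (-m)) (p x)) :
    Nat.card {z : Fin n // σ.SameCycle z (p z)} = Nat.card {x : Fin n // p x = x} * d := by
  have hbij : Function.Bijective (fun y : {x : Fin n // p x = x} × Fin d =>
      (⟨(σ ^ ((y.2 : ℕ) : ℤ)) y.1.1, by
        rw [S_zpow hps, show p y.1.1 = y.1.1 from y.1.2]⟩ :
        {z : Fin n // σ.SameCycle z (p z)})) := by
    constructor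
    · rintro ⟨⟨x, hx⟩, j⟩ ⟨⟨y, hy⟩, j'⟩ h
      simp only [Subtype.mk.injEq] at h
      have hxy : σ.SameCycle x y := by
        refine ⟨-((j' : ℕ) : ℤ) + ((j : ℕ) : ℤ), ?_⟩
        rw [← zadd, h, zadd, show -((j' : ℕ) : ℤ) + ((j' : ℕ) : ℤ) = 0 by ring]
        simp
      have hxeq : x = y := fix_unique hkey hodd hps hx hy hxy
      subst hxeq
      have hdj : (d : ℤ) ∣ ((j : ℕ) : ℤ) - ((j' : ℕ) : ℤ) := zpow_cancel hkey h
      have hj : j = j' := fin_eq_of_dvd j j' (by exact_mod_cast hdj)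
      subst hj
      rfl
    · rintro ⟨z, hz⟩
      obtain ⟨x, hx, hxz⟩ := exists_fix hkey hσd hodd hps hz
      obtain ⟨m, hm⟩ := hxz
      obtain ⟨j, hj⟩ := reduce_exp hσd hd0 m
      exact ⟨(⟨x, hx⟩, j), Subtype.ext (by simp only; rw [hj]; exact hm)⟩
  calc Nat.card {z : Fin n // σ.SameCycle z (p z)}
      = Nat.card ({x : Fin n // p x = x} × Fin d) :=
        (Nat.card_congr (Equiv.ofBijective _ hbij)).symm
    _ = _ := by rw [Nat.card_prod]; simp [Nat.card_eq_fintype_card]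

open scoped Classical in
lemma P_card (σ p : Equiv.Perm (Fin n))
    (hkey : ∀ (x : Fin n) (m : ℤ), (σ ^ m) x = x ↔ (d : ℤ) ∣ m)
    (hσd : σ ^ (d : ℤ) = 1) (hd0 : 0 < d) (hp2 : p ^ 2 = 1)
    (hps : ∀ (m : ℤ) (x : Fin n), p ((σ ^ m) x) = (σ ^ (-m)) (p x)) :
    Nat.card {z : Fin n // ¬ σ.SameCycle z (p z)} =
      Nat.card (Quotient (pSetoid σ p hp2 hps)) * (d * 2) := by
  have hmem : ∀ (q : Quotient (pSetoid σ p hp2 hps)) (j : Fin d) (b : Bool),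
      ¬ σ.SameCycle ((σ ^ ((j : ℕ) : ℤ)) ((pb p b) q.out.1))
        (p ((σ ^ ((j : ℕ) : ℤ)) ((pb p b) q.out.1))) := by
    intro q j b
    rw [S_zpow hps, S_pb hp2]
    exact q.out.2
  have hbij : Function.Bijective (fun y : Quotient (pSetoid σ p hp2 hps) × Fin d × Bool =>
      (⟨(σ ^ ((y.2.1 : ℕ) : ℤ)) ((pb p y.2.2) y.1.out.1), hmem y.1 y.2.1 y.2.2⟩ :
        {z : Fin n // ¬ σ.SameCycle z (p z)})) := by
    constructor
    · rintro ⟨q, j, b⟩ ⟨q', j', b'⟩ h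
      simp only [Subtype.mk.injEq] at h
      have hrel : σ.SameCycle q.out.1 q'.out.1 ∨ σ.SameCycle q.out.1 (p q'.out.1) :=
        rel_of_eq hp2 hps h
      have hqq : q = q' := by
        rw [← Quotient.out_eq q, ← Quotient.out_eq q']
        exact Quotient.sound hrel
      subst hqq
      obtain ⟨hb, hdvd⟩ := rigid hkey q.out.2 h
      have hj : j = j' := fin_eq_of_dvd j j' (by exact_mod_cast hdvd)
      subst hb; subst hj; rfl
    · rintro ⟨z, hz⟩
      have hrel := Quotient.exact
        (Quotient.out_eq (Quotient.mk (pSetoid σ p hp2 hps) ⟨z, hz⟩))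
      rcases hrel with h | h
      · obtain ⟨i, hi⟩ := h
        obtain ⟨j, hj⟩ := reduce_exp hσd hd0 i
        refine ⟨(Quotient.mk _ ⟨z, hz⟩, j, false), Subtype.ext ?_⟩
        simp only [pb, Bool.false_eq_true, if_false, Equiv.Perm.one_apply, Equiv.Perm.coe_one,
          id_eq]
        rw [hj]
        exact hi
      · obtain ⟨i, hi⟩ := h
        obtain ⟨j, hj⟩ := reduce_exp hσd hd0 (-i)
        refine ⟨(Quotient.mk _ ⟨z, hz⟩, j, true), Subtype.ext ?_⟩
        simp only [pb, if_true]
        rw [hj, ← hps i _, hi]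
        exact p_invol hp2 z
  calc Nat.card {z : Fin n // ¬ σ.SameCycle z (p z)}
      = Nat.card (Quotient (pSetoid σ p hp2 hps) × Fin d × Bool) :=
        (Nat.card_congr (Equiv.ofBijective _ hbij)).symm
    _ = _ := by
        rw [Nat.card_prod, Nat.card_prod]
        simp [Nat.card_eq_fintype_card]

end Stmt11

/-- `σ = τ₁⋯τ_k` is a product of `k` pairwise disjoint cycles of
odd length `d` without fixed points, and `π, π'` are involutions with
`πσπ⁻¹ = π'σ(π')⁻¹ = σ⁻¹`.  If `π, π'` are conjugate in `S_n`, then `ρπρ⁻¹ = π'` for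
some `ρ ∈ Cent₀(σ)`. -/
theorem dihedral_conjugate_in_cent0_of_odd
    {n k d : ℕ} (σ : Equiv.Perm (Fin n)) (τ : Fin k → Equiv.Perm (Fin n))
    (hcyc : ∀ i, (τ i).IsCycle) (hlen : ∀ i, (τ i).support.card = d)
    (hdisj : ∀ i j, i ≠ j → Equiv.Perm.Disjoint (τ i) (τ j))
    (hσ : σ = (List.ofFn τ).prod)
    (hfix : ∀ x : Fin n, σ x ≠ x)
    (hodd : Odd d)
    (π π' : Equiv.Perm (Fin n))
    (hπ2 : π ^ 2 = 1) (hπ'2 : π' ^ 2 = 1)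
    (hπσ : π * σ * π⁻¹ = σ⁻¹) (hπ'σ : π' * σ * π'⁻¹ = σ⁻¹)
    (hconj : IsConj π π') :
    ∃ ρ ∈ Cent0 σ, ρ * π * ρ⁻¹ = π' := by

  classical
  have hd0 : 0 < d := hodd.pos
  have hdisjL : List.Pairwise Equiv.Perm.Disjoint (List.ofFn τ) :=
    List.pairwise_ofFn.2 fun i j hij => hdisj i j (Fin.ne_of_lt hij)
  have hmem : ∀ x : Fin n, ∃ i, (τ i) x ≠ x ∧ σ x = (τ i) x := by
    intro x
    rcases Stmt11.list_prod_apply (List.ofFn τ) hdisjL x with h | ⟨e, he, hex, hpx⟩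
    · exact absurd (by rw [hσ]; exact Stmt11.list_prod_fix _ x h) (hfix x)
    · obtain ⟨i, rfl⟩ := List.mem_ofFn.1 he
      exact ⟨i, hex, by rw [hσ]; exact hpx⟩
  have hfact : ∀ i, τ i ∈ σ.cycleFactorsFinset := by
    intro i
    rw [Equiv.Perm.mem_cycleFactorsFinset_iff]
    refine ⟨hcyc i, fun y hy => ?_⟩
    obtain ⟨j, hjy, hjeq⟩ := hmem y
    rcases eq_or_ne j i with rfl | hji
    · exact hjeq.symm
    · rcases hdisj j i hji y with h1 | h1
      · exact absurd h1 hjy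
      · exact absurd h1 (Equiv.Perm.mem_support.1 hy)
  have hkey : ∀ (x : Fin n) (m : ℤ), (σ ^ m) x = x ↔ (d : ℤ) ∣ m := by
    intro x m
    obtain ⟨i, hix, -⟩ := hmem x
    have hxsupp : x ∈ (τ i).support := Equiv.Perm.mem_support.2 hix
    have hco : τ i = σ.cycleOf x := Equiv.Perm.cycle_is_cycleOf hxsupp (hfact i)
    have ho : orderOf (τ i) = d := by rw [(hcyc i).orderOf, hlen i]
    have h1 : (σ ^ m) x = ((τ i) ^ m) x := by
      rw [hco]; exact (Equiv.Perm.cycleOf_zpow_apply_self σ x m).symm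
    rw [h1]
    constructor
    · intro h
      have h0 : (0 : ℤ) < d := by exact_mod_cast hd0
      have hnn : 0 ≤ m % (d : ℤ) := Int.emod_nonneg m (by omega)
      have hlt : m % (d : ℤ) < d := Int.emod_lt_of_pos m h0
      have hdvdmod : (d : ℤ) ∣ (m % (d : ℤ)) - m :=
        ⟨-(m / d), by have := Int.mul_ediv_add_emod m d; linarith⟩
      have htau : (τ i) ^ (d : ℤ) = 1 :=
        orderOf_dvd_iff_zpow_eq_one.1 (by rw [ho])
      have h2 : ((τ i) ^ (m % (d : ℤ))) x = x := by
        rw [Stmt11.zpow_congr htau hdvdmod]; exact h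
      have h3 : ((τ i) ^ ((m % (d : ℤ)).toNat)) x = x := by
        have hc : ((τ i) ^ ((m % (d : ℤ)).toNat) : Equiv.Perm (Fin n)) =
            (τ i) ^ (((m % (d : ℤ)).toNat : ℕ) : ℤ) := (zpow_natCast _ _).symm
        rw [hc, Int.toNat_of_nonneg hnn]; exact h2
      have h4 : (τ i) ^ ((m % (d : ℤ)).toNat) = 1 :=
        ((hcyc i).pow_eq_one_iff' hix).2 h3
      have h5 : d ∣ (m % (d : ℤ)).toNat := by
        have h5' := orderOf_dvd_of_pow_eq_one h4
        rwa [ho] at h5'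
      have h6 : (m % (d : ℤ)).toNat < d := by omega
      have h7 : (m % (d : ℤ)).toNat = 0 := Nat.eq_zero_of_dvd_of_lt h5 h6
      have h8 : m % (d : ℤ) = 0 := by omega
      exact Int.dvd_of_emod_eq_zero h8
    · intro h
      have hto : (τ i) ^ m = 1 := orderOf_dvd_iff_zpow_eq_one.1 (by rw [ho]; exact h)
      rw [hto]; simp
  have hσd : σ ^ (d : ℤ) = 1 := by
    apply Equiv.ext
    intro x
    have := (hkey x d).2 dvd_rfl
    simpa using this
  have hconjpow : ∀ p : Equiv.Perm (Fin n), p * σ * p⁻¹ = σ⁻¹ →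
      ∀ (m : ℤ) (x : Fin n), p ((σ ^ m) x) = (σ ^ (-m)) (p x) := by
    intro p hp m x
    have h1 : p * σ ^ m * p⁻¹ = σ ^ (-m) := by
      have h2 : p * σ ^ m * p⁻¹ = (p * σ * p⁻¹) ^ m := by
        simpa [MulAut.conj_apply] using (map_zpow (MulAut.conj p) σ m).symm
      rw [h2, hp, inv_zpow, ← zpow_neg]
    have h3 : p * σ ^ m = σ ^ (-m) * p := mul_inv_eq_iff_eq_mul.1 h1
    calc p ((σ ^ m) x) = (p * σ ^ m) x := rfl
      _ = (σ ^ (-m) * p) x := by rw [h3]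
      _ = (σ ^ (-m)) (p x) := rfl
  have hpsπ := hconjpow π hπσ
  have hpsπ' := hconjpow π' hπ'σ
  have hππ : ∀ x, π (π x) = x := Stmt11.p_invol hπ2
  obtain ⟨g, hg⟩ := isConj_iff.1 hconj
  have hgfix : ∀ x : Fin n, π x = x ↔ π' (g x) = g x := by
    intro x
    have h1 : π' (g x) = g (π x) := by
      rw [← hg]
      simp [Equiv.Perm.mul_apply]
    constructor
    · intro h; rw [h1, h]
    · intro h; rw [h1] at h; exact g.injective h
  have hSdata : ∀ z : {z : Fin n // σ.SameCycle z (π z)},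
      ∃ (x : Fin n) (m : ℤ), π x = x ∧ (σ ^ m) x = z.1 := by
    intro z
    obtain ⟨x, hx, hxz⟩ := Stmt11.exists_fix hkey hσd hodd hpsπ z.2
    obtain ⟨m, hm⟩ := hxz
    exact ⟨x, m, hx, hm⟩
  choose xf mf hxf hmf using hSdata
  have hsc : ∀ w : {z : Fin n // σ.SameCycle z (π z)}, σ.SameCycle (xf w) w.1 :=
    fun w => ⟨mf w, hmf w⟩
  have hPdata : ∀ z : {z : Fin n // ¬ σ.SameCycle z (π z)},
      ∃ (m : ℤ) (b : Bool),
        (σ ^ m) ((Stmt11.pb π b)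
          ((Quotient.mk (Stmt11.pSetoid σ π hπ2 hpsπ) z).out.1)) = z.1 := by
    intro z
    have hrel := Quotient.exact
      (Quotient.out_eq (Quotient.mk (Stmt11.pSetoid σ π hπ2 hpsπ) z))
    rcases hrel with h | h
    · obtain ⟨i, hi⟩ := h
      exact ⟨i, false, by simpa [Stmt11.pb] using hi⟩
    · obtain ⟨i, hi⟩ := h
      refine ⟨-i, true, ?_⟩
      simp only [Stmt11.pb, if_true]
      rw [← hpsπ i _, hi]
      exact hππ z.1
  choose jf bf hjbf using hPdata
  haveI : Finite (Quotient (Stmt11.pSetoid σ π hπ2 hpsπ)) := Quotient.finite _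
  haveI : Finite (Quotient (Stmt11.pSetoid σ π' hπ'2 hpsπ')) := Quotient.finite _
  have hcardF : Nat.card {x : Fin n // π x = x} = Nat.card {x : Fin n // π' x = x} :=
    Nat.card_congr (Equiv.subtypeEquiv g hgfix)
  have hsplit : ∀ p : Equiv.Perm (Fin n),
      Nat.card {z : Fin n // σ.SameCycle z (p z)} +
        Nat.card {z : Fin n // ¬ σ.SameCycle z (p z)} = n := by
    intro p
    have h1 := Nat.card_congr (Equiv.sumCompl (fun z : Fin n => σ.SameCycle z (p z)))
    rw [Nat.card_sum] at h1
    simpa [Nat.card_eq_fintype_card] using h1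
  have hcardP : Nat.card {z : Fin n // ¬ σ.SameCycle z (π z)} =
      Nat.card {z : Fin n // ¬ σ.SameCycle z (π' z)} := by
    have h1 := hsplit π
    have h2 := hsplit π'
    have h3 := Stmt11.S_card σ π hkey hσd hd0 hodd hpsπ
    have h4 := Stmt11.S_card σ π' hkey hσd hd0 hodd hpsπ'
    have h5 : Nat.card {z : Fin n // σ.SameCycle z (π z)} =
        Nat.card {z : Fin n // σ.SameCycle z (π' z)} := by rw [h3, h4, hcardF]
    omega
  have hcardQ : Nat.card (Quotient (Stmt11.pSetoid σ π hπ2 hpsπ)) =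
      Nat.card (Quotient (Stmt11.pSetoid σ π' hπ'2 hpsπ')) := by
    have h1 := Stmt11.P_card σ π hkey hσd hd0 hπ2 hpsπ
    have h2 := Stmt11.P_card σ π' hkey hσd hd0 hπ'2 hpsπ'
    rw [h1, h2] at hcardP
    exact Nat.eq_of_mul_eq_mul_right (by omega) hcardP
  obtain ⟨ψ⟩ := Finite.card_eq.1 hcardQ
  let f : Fin n → Fin n := fun z =>
    if hz : σ.SameCycle z (π z) then (σ ^ mf ⟨z, hz⟩) (g (xf ⟨z, hz⟩))
    else (σ ^ jf ⟨z, hz⟩) ((Stmt11.pb π' (bf ⟨z, hz⟩))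
      ((ψ (Quotient.mk (Stmt11.pSetoid σ π hπ2 hpsπ) ⟨z, hz⟩)).out.1))
  have hfS : ∀ (z : Fin n) (hz : σ.SameCycle z (π z)),
      f z = (σ ^ mf ⟨z, hz⟩) (g (xf ⟨z, hz⟩)) := fun z hz => dif_pos hz
  have hfP : ∀ (z : Fin n) (hz : ¬ σ.SameCycle z (π z)),
      f z = (σ ^ jf ⟨z, hz⟩) ((Stmt11.pb π' (bf ⟨z, hz⟩))
        ((ψ (Quotient.mk (Stmt11.pSetoid σ π hπ2 hpsπ) ⟨z, hz⟩)).out.1)) :=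
    fun z hz => dif_neg hz
  have hfσ : ∀ z : Fin n, f (σ z) = σ (f z) := by
    intro z
    have hz1 : σ.SameCycle (σ z) (π (σ z)) ↔ σ.SameCycle z (π z) := by
      have h1 := Stmt11.S_zpow (σ := σ) hpsπ 1 z
      rw [zpow_one] at h1
      exact h1
    have hsc1 : σ.SameCycle (σ z) z := ⟨-1, by
      rw [show σ z = (σ ^ (1:ℤ)) z by simp, Stmt11.zadd, show (-1 + 1 : ℤ) = 0 by ring]
      simp⟩
    by_cases hz : σ.SameCycle z (π z)
    · have hz' : σ.SameCycle (σ z) (π (σ z)) := hz1.2 hz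
      rw [hfS _ hz', hfS _ hz]
      have hx1 : xf ⟨σ z, hz'⟩ = xf ⟨z, hz⟩ := by
        apply Stmt11.fix_unique hkey hodd hpsπ (hxf _) (hxf _)
        exact (hsc ⟨σ z, hz'⟩).trans (hsc1.trans (hsc ⟨z, hz⟩).symm)
      have e1 : (σ ^ mf ⟨σ z, hz'⟩) (xf ⟨z, hz⟩) = σ z := by rw [← hx1]; exact hmf _
      have e2 : (σ ^ (1 + mf ⟨z, hz⟩)) (xf ⟨z, hz⟩) = σ z := by
        rw [← Stmt11.zadd, hmf ⟨z, hz⟩, zpow_one]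
      have hde : (d : ℤ) ∣ mf ⟨σ z, hz'⟩ - (1 + mf ⟨z, hz⟩) :=
        Stmt11.zpow_cancel hkey (e1.trans e2.symm)
      rw [hx1, Stmt11.zpow_congr hσd hde, ← Stmt11.zadd, zpow_one]
    · have hz' : ¬ σ.SameCycle (σ z) (π (σ z)) := fun hc => hz (hz1.1 hc)
      rw [hfP _ hz', hfP _ hz]
      have hq : Quotient.mk (Stmt11.pSetoid σ π hπ2 hpsπ) ⟨σ z, hz'⟩ =
          Quotient.mk (Stmt11.pSetoid σ π hπ2 hpsπ) ⟨z, hz⟩ :=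
        Quotient.sound (Or.inl hsc1)
      have h1 := hjbf ⟨σ z, hz'⟩
      rw [hq] at h1 ⊢
      have h0 := hjbf ⟨z, hz⟩
      have e2 : (σ ^ (1 + jf ⟨z, hz⟩))
          ((Stmt11.pb π (bf ⟨z, hz⟩))
            ((Quotient.mk (Stmt11.pSetoid σ π hπ2 hpsπ) ⟨z, hz⟩).out.1)) = σ z := by
        rw [← Stmt11.zadd, h0, zpow_one]
      obtain ⟨hb, hdvd⟩ := Stmt11.rigid hkey
        ((Quotient.mk (Stmt11.pSetoid σ π hπ2 hpsπ) ⟨z, hz⟩).out.2) (h1.trans e2.symm)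
      rw [hb, Stmt11.zpow_congr hσd hdvd, ← Stmt11.zadd, zpow_one]
  have hfπ : ∀ z : Fin n, f (π z) = π' (f z) := by
    intro z
    have hz1 : σ.SameCycle (π z) (π (π z)) ↔ σ.SameCycle z (π z) := Stmt11.S_p hπ2 z
    by_cases hz : σ.SameCycle z (π z)
    · have hz' := hz1.2 hz
      rw [hfS _ hz', hfS _ hz]
      have hx1 : xf ⟨π z, hz'⟩ = xf ⟨z, hz⟩ := by
        apply Stmt11.fix_unique hkey hodd hpsπ (hxf _) (hxf _)
        exact (hsc ⟨π z, hz'⟩).trans (hz.symm.trans (hsc ⟨z, hz⟩).symm)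
      have e1 : (σ ^ mf ⟨π z, hz'⟩) (xf ⟨z, hz⟩) = π z := by rw [← hx1]; exact hmf _
      have e2 : (σ ^ (- mf ⟨z, hz⟩)) (xf ⟨z, hz⟩) = π z := by
        have h3 : π ((σ ^ mf ⟨z, hz⟩) (xf ⟨z, hz⟩)) = π z := by rw [hmf ⟨z, hz⟩]
        rw [hpsπ, hxf] at h3
        exact h3
      have hde : (d : ℤ) ∣ mf ⟨π z, hz'⟩ - (- mf ⟨z, hz⟩) :=
        Stmt11.zpow_cancel hkey (e1.trans e2.symm)
      rw [hx1, Stmt11.zpow_congr hσd hde, hpsπ']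
      congr 1
      exact ((hgfix _).1 (hxf _)).symm
    · have hz' : ¬ σ.SameCycle (π z) (π (π z)) := fun hc => hz (hz1.1 hc)
      rw [hfP _ hz', hfP _ hz]
      have hq : Quotient.mk (Stmt11.pSetoid σ π hπ2 hpsπ) ⟨π z, hz'⟩ =
          Quotient.mk (Stmt11.pSetoid σ π hπ2 hpsπ) ⟨z, hz⟩ :=
        Quotient.sound (Or.inr (Equiv.Perm.SameCycle.refl σ (π z)))
      have h1 := hjbf ⟨π z, hz'⟩
      rw [hq] at h1 ⊢
      have h0 := hjbf ⟨z, hz⟩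
      have e2 : (σ ^ (- jf ⟨z, hz⟩))
          ((Stmt11.pb π (!(bf ⟨z, hz⟩)))
            ((Quotient.mk (Stmt11.pSetoid σ π hπ2 hpsπ) ⟨z, hz⟩).out.1)) = π z := by
        rw [← Stmt11.p_pb hπ2, ← hpsπ, h0]
      obtain ⟨hb, hdvd⟩ := Stmt11.rigid hkey
        ((Quotient.mk (Stmt11.pSetoid σ π hπ2 hpsπ) ⟨z, hz⟩).out.2) (h1.trans e2.symm)
      rw [hb, Stmt11.zpow_congr hσd hdvd, hpsπ', Stmt11.p_pb hπ'2]
  have hSmap : ∀ (z : Fin n) (hz : σ.SameCycle z (π z)),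
      σ.SameCycle (f z) (π' (f z)) := by
    intro z hz
    rw [hfS _ hz, Stmt11.S_zpow hpsπ',
      show π' (g (xf ⟨z, hz⟩)) = g (xf ⟨z, hz⟩) from (hgfix _).1 (hxf _)]
  have hPmap : ∀ (z : Fin n) (hz : ¬ σ.SameCycle z (π z)),
      ¬ σ.SameCycle (f z) (π' (f z)) := by
    intro z hz
    rw [hfP _ hz, Stmt11.S_zpow hpsπ', Stmt11.S_pb hπ'2]
    exact (ψ (Quotient.mk (Stmt11.pSetoid σ π hπ2 hpsπ) ⟨z, hz⟩)).out.2
  have hinj : Function.Injective f := by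
    intro z1 z2 h
    by_cases hz1 : σ.SameCycle z1 (π z1) <;> by_cases hz2 : σ.SameCycle z2 (π z2)
    · rw [hfS _ hz1, hfS _ hz2] at h
      have hg12 : σ.SameCycle (g (xf ⟨z1, hz1⟩)) (g (xf ⟨z2, hz2⟩)) := by
        refine ⟨- mf ⟨z2, hz2⟩ + mf ⟨z1, hz1⟩, ?_⟩
        rw [← Stmt11.zadd, h, Stmt11.zadd,
          show - mf ⟨z2, hz2⟩ + mf ⟨z2, hz2⟩ = (0:ℤ) by ring]
        simp
      have hgeq : g (xf ⟨z1, hz1⟩) = g (xf ⟨z2, hz2⟩) :=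
        Stmt11.fix_unique hkey hodd hpsπ' ((hgfix _).1 (hxf _)) ((hgfix _).1 (hxf _)) hg12
      have hxeq : xf ⟨z1, hz1⟩ = xf ⟨z2, hz2⟩ := g.injective hgeq
      rw [hgeq] at h
      have hdvd := Stmt11.zpow_cancel hkey h
      exact (hmf ⟨z1, hz1⟩).symm.trans
        (by rw [hxeq, Stmt11.zpow_congr hσd hdvd]; exact hmf ⟨z2, hz2⟩)
    · exact absurd (h ▸ hSmap z1 hz1) (hPmap z2 hz2)
    · exact absurd (h.symm ▸ hSmap z2 hz2) (hPmap z1 hz1)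
    · rw [hfP _ hz1, hfP _ hz2] at h
      have hrel := Stmt11.rel_of_eq hπ'2 hpsπ' h
      have hqq : ψ (Quotient.mk (Stmt11.pSetoid σ π hπ2 hpsπ) ⟨z1, hz1⟩) =
          ψ (Quotient.mk (Stmt11.pSetoid σ π hπ2 hpsπ) ⟨z2, hz2⟩) := by
        rw [← Quotient.out_eq (ψ (Quotient.mk (Stmt11.pSetoid σ π hπ2 hpsπ) ⟨z1, hz1⟩)),
          ← Quotient.out_eq (ψ (Quotient.mk (Stmt11.pSetoid σ π hπ2 hpsπ) ⟨z2, hz2⟩))]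
        exact Quotient.sound hrel
      have hq12 : Quotient.mk (Stmt11.pSetoid σ π hπ2 hpsπ) ⟨z1, hz1⟩ =
          Quotient.mk (Stmt11.pSetoid σ π hπ2 hpsπ) ⟨z2, hz2⟩ := ψ.injective hqq
      rw [hq12] at h
      obtain ⟨hb, hdvd⟩ := Stmt11.rigid hkey
        ((ψ (Quotient.mk (Stmt11.pSetoid σ π hπ2 hpsπ) ⟨z2, hz2⟩)).out.2) h
      have ez1 := hjbf ⟨z1, hz1⟩
      rw [hq12] at ez1
      exact ez1.symm.trans
        (by rw [hb, Stmt11.zpow_congr hσd hdvd]; exact hjbf ⟨z2, hz2⟩)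
  have hbijf : Function.Bijective f := Finite.injective_iff_bijective.1 hinj
  refine ⟨Equiv.ofBijective f hbijf, ⟨?_, ?_⟩, ?_⟩
  · show Equiv.ofBijective f hbijf * σ = σ * Equiv.ofBijective f hbijf
    apply Equiv.ext
    intro z
    exact hfσ z
  · intro x _
    exact Equiv.Perm.mem_support.2 (hfix x)
  · have hmul : Equiv.ofBijective f hbijf * π = π' * Equiv.ofBijective f hbijf := by
      apply Equiv.ext
      intro z
      exact hfπ z
    rw [hmul, mul_inv_cancel_right]
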